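/- arXiv:2105.03762 — 5 statements merged into one kernel-verified Lean document; each statement's English description precedes it below -/
import Mathlib

section
/- Let U be an n×n complex unitary matrix and let x and y be unit vectors in ℂⁿ. Then there is pretty good state transfer from x to y (i.e., there exists γ ∈ ℂ with |γ| = 1 such that for every ε > 0 there is t ∈ ℤ with ‖U^t x − γ y‖ < ε) if and only if for every ε > 0 there exists t ∈ ℤ such that |⟨U^t x, y⟩| > 1 − ε. -/
open Matrix Complex Finset

/-- The Euclidean norm of a vector in `ℂⁿ`. -/
noncomputable def euclNorm {ι : Type*} [Fintype ι] (v : ι → ℂ) : ℝ :=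
  Real.sqrt (∑ i, ‖v i‖ ^ 2)

/-- The Euclidean inner product `⟨v, w⟩ = ∑ᵢ vᵢ conj(wᵢ)` on `ℂⁿ`. -/
noncomputable def euclInner {ι : Type*} [Fintype ι] (v w : ι → ℂ) : ℂ :=
  ∑ i, v i * star (w i)

/-- Pretty good state transfer from `x` to `y` under the unitary `U`. -/
def PGST {ι : Type*} [Fintype ι] [DecidableEq ι] (U : Matrix ι ι ℂ) (x y : ι → ℂ) : Prop :=
  ∃ γ : ℂ, ‖γ‖ = 1 ∧ ∀ ε > 0, ∃ t : ℤ, euclNorm ((U ^ t).mulVec x - γ • y) < ε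


noncomputable def toE {n : ℕ} (v : Fin n → ℂ) : EuclideanSpace ℂ (Fin n) :=
  (WithLp.equiv 2 (Fin n → ℂ)).symm v

lemma toE_sub {n : ℕ} (v w : Fin n → ℂ) : toE (v - w) = toE v - toE w := rfl
lemma toE_smul {n : ℕ} (c : ℂ) (v : Fin n → ℂ) : toE (c • v) = c • toE v := rfl

lemma euclNorm_eq {n : ℕ} (v : Fin n → ℂ) : euclNorm v = ‖toE v‖ := by
  rw [euclNorm, EuclideanSpace.norm_eq]
  rfl

lemma euclInner_eq {n : ℕ} (v w : Fin n → ℂ) :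
    euclInner v w = inner ℂ (toE w) (toE v) := by
  rw [euclInner, PiLp.inner_apply]
  simp [RCLike.inner_apply, mul_comm, toE]

lemma inner_mulVec {n : ℕ} (V : Matrix (Fin n) (Fin n) ℂ) (a b : Fin n → ℂ) :
    euclInner (V.mulVec a) b = euclInner a (Vᴴ.mulVec b) := by
  simp only [euclInner, Matrix.mulVec, dotProduct, Matrix.conjTranspose_apply,
    Finset.sum_mul, Finset.mul_sum, star_sum, star_mul', star_star]
  rw [Finset.sum_comm]
  congr 1; ext i; congr 1; ext j; ring

lemma inner_unitary {n : ℕ} {V : Matrix (Fin n) (Fin n) ℂ}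
    (hV : V ∈ Matrix.unitaryGroup (Fin n) ℂ) (a b : Fin n → ℂ) :
    euclInner (V.mulVec a) (V.mulVec b) = euclInner a b := by
  rw [inner_mulVec, Matrix.mulVec_mulVec]
  have : Vᴴ * V = 1 := hV.1
  rw [this, Matrix.one_mulVec]

lemma norm_unitary {n : ℕ} {V : Matrix (Fin n) (Fin n) ℂ}
    (hV : V ∈ Matrix.unitaryGroup (Fin n) ℂ) (a : Fin n → ℂ) :
    euclNorm (V.mulVec a) = euclNorm a := by
  have h := inner_unitary hV a a
  rw [euclInner_eq, euclInner_eq] at h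
  rw [euclNorm_eq, euclNorm_eq, ← Real.sqrt_sq (norm_nonneg (toE (V.mulVec a))),
    ← Real.sqrt_sq (norm_nonneg (toE a))]
  congr 1
  rw [@inner_self_eq_norm_sq_to_K ℂ, @inner_self_eq_norm_sq_to_K ℂ] at h
  exact_mod_cast h

lemma zpow_unitary {n : ℕ} {U : Matrix (Fin n) (Fin n) ℂ}
    (hU : U ∈ Matrix.unitaryGroup (Fin n) ℂ) (t : ℤ) :
    U ^ t ∈ Matrix.unitaryGroup (Fin n) ℂ := by
  cases t with
  | ofNat k => rw [Int.ofNat_eq_coe, zpow_natCast]; exact pow_mem hU k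
  | negSucc k =>
    rw [zpow_negSucc]
    have hm : U ^ (k + 1) ∈ Matrix.unitaryGroup (Fin n) ℂ := pow_mem hU (k + 1)
    have : (U ^ (k + 1))⁻¹ = star (U ^ (k + 1)) :=
      Matrix.inv_eq_left_inv hm.1
    rw [this]
    exact Unitary.star_mem hm

lemma norm_sub_smul_sq {n : ℕ} (u w : Fin n → ℂ) (hu : euclNorm u = 1) (hw : euclNorm w = 1)
    (γ : ℂ) (hγ : ‖γ‖ = 1) :
    euclNorm (u - γ • w) ^ 2
      = 2 - 2 * (γ * (inner ℂ (toE u) (toE w) : ℂ)).re := by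
  have hu' : ‖toE u‖ = 1 := by rw [← euclNorm_eq, hu]
  have hw' : ‖toE w‖ = 1 := by rw [← euclNorm_eq, hw]
  rw [euclNorm_eq, toE_sub, toE_smul, @norm_sub_sq ℂ, inner_smul_right, norm_smul, hu', hw', hγ]
  simp only [RCLike.re_to_complex]
  ring

lemma euclNorm_nonneg {n : ℕ} (v : Fin n → ℂ) : 0 ≤ euclNorm v := Real.sqrt_nonneg _

private theorem stmt3_aux {n : ℕ} (U : Matrix (Fin n) (Fin n) ℂ)
    (hU : U ∈ Matrix.unitaryGroup (Fin n) ℂ)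
    (x y : Fin n → ℂ) (hx : euclNorm x = 1) (hy : euclNorm y = 1) :
    (∃ γ : ℂ, ‖γ‖ = 1 ∧ ∀ ε > 0, ∃ t : ℤ, euclNorm ((U ^ t).mulVec x - γ • y) < ε)
      ↔ ∀ ε > 0, ∃ t : ℤ, 1 - ε < ‖euclInner ((U ^ t).mulVec x) y‖ := by
  have hnorm : ∀ t : ℤ, euclNorm ((U ^ t).mulVec x) = 1 := fun t => by
    rw [norm_unitary (zpow_unitary hU t), hx]
  constructor
  · rintro ⟨γ, hγ, h⟩ ε hε
    have hδ : 0 < min ε 1 := lt_min hε one_pos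
    obtain ⟨t, ht⟩ := h (min ε 1) hδ
    refine ⟨t, ?_⟩
    set u := (U ^ t).mulVec x with hu_def
    have hsq := norm_sub_smul_sq u y (hnorm t) hy γ hγ
    have h2 : euclNorm (u - γ • y) ^ 2 < (min ε 1) ^ 2 :=
      pow_lt_pow_left₀ ht (euclNorm_nonneg _) two_ne_zero
    rw [hsq] at h2
    have hre : 1 - (min ε 1) ^ 2 / 2 < (γ * (inner ℂ (toE u) (toE y) : ℂ)).re := by linarith
    have hle : (γ * (inner ℂ (toE u) (toE y) : ℂ)).re ≤ ‖euclInner u y‖ := by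
      calc (γ * (inner ℂ (toE u) (toE y) : ℂ)).re ≤ ‖γ * (inner ℂ (toE u) (toE y) : ℂ)‖ :=
            Complex.re_le_norm _
        _ = ‖(inner ℂ (toE u) (toE y) : ℂ)‖ := by rw [norm_mul, hγ, one_mul]
        _ = ‖euclInner u y‖ := by rw [euclInner_eq]; exact (norm_inner_symm _ _).symm
    have hmin : (min ε 1) ^ 2 ≤ min ε 1 := by
      nlinarith [min_le_right ε 1, le_of_lt hδ]
    have hminle : min ε 1 ≤ ε := min_le_left ε 1
    linarith
  · intro h
    set c : ℤ → ℂ := fun t => euclInner ((U ^ t).mulVec x) y with hc_def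
    have hsel : ∀ k : ℕ, ∃ t : ℤ, 1 - 1 / (k + 1) < ‖c t‖ := fun k =>
      h (1 / (k + 1)) (by positivity)
    choose ts hts using hsel
    have hpos : ∀ k : ℕ, 0 < ‖c (ts k)‖ := fun k => by
      have h1 : (0:ℝ) ≤ 1 - 1 / (k + 1) := by
        have : (1:ℝ) / (k + 1) ≤ 1 := by
          rw [div_le_one (by positivity)]; simp
        linarith
      exact lt_of_le_of_lt (by linarith) (hts k)
    set γs : ℕ → ℂ := fun k => (‖c (ts k)‖ : ℂ)⁻¹ * c (ts k) with hγs_def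
    have hγmem : ∀ k, γs k ∈ Metric.sphere (0:ℂ) 1 := fun k => by
      rw [mem_sphere_zero_iff_norm, hγs_def]
      simp only [norm_mul, norm_inv, Complex.norm_real, norm_norm]
      rw [inv_mul_cancel₀ (ne_of_gt (hpos k))]
    obtain ⟨γ, hγmem', φ, hφ, hconv⟩ := (isCompact_sphere (0:ℂ) 1).tendsto_subseq hγmem
    have hγ : ‖γ‖ = 1 := mem_sphere_zero_iff_norm.mp hγmem'
    refine ⟨γ, hγ, fun ε hε => ?_⟩
    obtain ⟨N, hN⟩ := (Metric.tendsto_atTop.mp hconv) (ε / 2) (by linarith)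
    obtain ⟨K, hK⟩ := exists_nat_gt (2 / (ε / 2) ^ 2)
    set k := max N K with hk_def
    set t := ts (φ k) with ht_def
    refine ⟨t, ?_⟩
    set u := (U ^ t).mulVec x with hu_def
    set g := γs (φ k) with hg_def
    have hgnorm : ‖g‖ = 1 := mem_sphere_zero_iff_norm.mp (hγmem (φ k))
    -- the key computation : g * ⟪toE u, toE y⟫ = ‖c t‖
    have hz : c t = (starRingEnd ℂ) (inner ℂ (toE u) (toE y) : ℂ) := by
      simp only [hc_def, ← hu_def]
      rw [euclInner_eq, ← inner_conj_symm]
    have hgc : g = (‖c t‖ : ℂ)⁻¹ * c t := rfl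
    have hgz : g * (inner ℂ (toE u) (toE y) : ℂ) = (‖c t‖ : ℂ) := by
      rw [hgc, hz]
      set z := (inner ℂ (toE u) (toE y) : ℂ)
      have hzpos : (0:ℝ) < ‖z‖ := by
        have := hpos (φ k); rw [← ht_def, hz, RCLike.norm_conj] at this; exact this
      have h1 : (starRingEnd ℂ) z * z = ((‖z‖ ^ 2 : ℝ) : ℂ) := by
        rw [mul_comm, Complex.mul_conj, Complex.normSq_eq_norm_sq]
      rw [RCLike.norm_conj, mul_assoc, h1]
      have hne : ((‖z‖ : ℝ) : ℂ) ≠ 0 := Complex.ofReal_ne_zero.mpr (ne_of_gt hzpos)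
      push_cast
      rw [pow_two, ← mul_assoc, inv_mul_cancel₀ hne, one_mul]
    have hsq := norm_sub_smul_sq u y (hnorm t) hy g hgnorm
    rw [hgz] at hsq
    have hsq' : euclNorm (u - g • y) ^ 2 = 2 - 2 * ‖c t‖ := by
      rw [hsq]; norm_num
    have hφk : (k:ℝ) ≤ (φ k : ℝ) := by exact_mod_cast hφ.le_apply
    have hKk : (K:ℝ) ≤ (k:ℝ) := by exact_mod_cast le_max_right N K
    have hKpos : (0:ℝ) < K := lt_of_le_of_lt (by positivity) hK
    have hbound : 2 / ((φ k : ℝ) + 1) < (ε / 2) ^ 2 := by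
      have h1 : (K:ℝ) ≤ (φ k : ℝ) + 1 := by linarith
      calc 2 / ((φ k : ℝ) + 1) ≤ 2 / (K:ℝ) := by
            apply div_le_div_of_nonneg_left (by norm_num) hKpos h1
        _ < (ε / 2) ^ 2 := by
            rw [div_lt_iff₀ hKpos]
            rw [div_lt_iff₀ (by positivity : (0:ℝ) < (ε / 2) ^ 2)] at hK
            nlinarith
    have hct : 1 - 1 / ((φ k : ℝ) + 1) < ‖c t‖ := hts (φ k)
    have hA2 : euclNorm (u - g • y) ^ 2 < (ε / 2) ^ 2 := by
      rw [hsq']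
      have : 2 - 2 * ‖c t‖ < 2 / ((φ k : ℝ) + 1) := by
        have hd : (0:ℝ) < (φ k : ℝ) + 1 := by positivity
        have h2 : 2 / ((φ k : ℝ) + 1) = 2 * (1 / ((φ k : ℝ) + 1)) := by ring
        rw [h2]; linarith
      linarith
    have hA : euclNorm (u - g • y) < ε / 2 :=
      lt_of_pow_lt_pow_left₀ 2 (by linarith) hA2
    have hdist : ‖g - γ‖ < ε / 2 := by
      have := hN k (le_max_left N K)
      rwa [Function.comp_apply, dist_eq_norm] at this
    -- triangle inequality
    have hy1 : ‖toE y‖ = 1 := by rw [← euclNorm_eq, hy]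
    calc euclNorm (u - γ • y) = ‖(toE u - g • toE y) + (g - γ) • toE y‖ := by
          rw [euclNorm_eq, toE_sub, toE_smul]; congr 1; module
      _ ≤ ‖toE u - g • toE y‖ + ‖(g - γ) • toE y‖ := norm_add_le _ _
      _ = euclNorm (u - g • y) + ‖g - γ‖ := by
          rw [euclNorm_eq, toE_sub, toE_smul, norm_smul, hy1, mul_one]
      _ < ε / 2 + ε / 2 := by exact add_lt_add hA hdist
      _ = ε := by ring


theorem stmt3 {n : ℕ} (U : Matrix (Fin n) (Fin n) ℂ)
    (hU : U ∈ Matrix.unitaryGroup (Fin n) ℂ)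
    (x y : Fin n → ℂ) (hx : euclNorm x = 1) (hy : euclNorm y = 1) :
    PGST U x y ↔ ∀ ε > 0, ∃ t : ℤ, 1 - ε < ‖euclInner ((U ^ t).mulVec x) y‖ := by
  exact stmt3_aux U hU x y hx hy
end

section
/- Let U be an n×n complex unitary matrix with spectral decomposition U = Σ_r e^{iθ_r} F_r, and let x, y be unit vectors in ℂⁿ. Then perfect state transfer occurs from x to y (i.e., there exist t ∈ ℤ and γ ∈ ℂ with U^t x = γ y) if and only if both: (i) x and y are strongly cospectral, i.e., for each r there is μ_r ∈ ℂ with |μ_r| = 1 and F_r x = μ_r F_r y; and (ii) there exists t ∈ ℤ such that e^{itθ_r} μ_r = e^{itθ_s} μ_s for all r, s in the eigenvalue support Θ_x = {r : F_r x ≠ 0}. -/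
open Matrix Complex Finset

lemma sum_mulVec' {ι : Type*} [Fintype ι] {n : ℕ} (A : ι → Matrix (Fin n) (Fin n) ℂ)
    (v : Fin n → ℂ) : (∑ r, A r) *ᵥ v = ∑ r, A r *ᵥ v := by
  ext i
  simp only [Matrix.mulVec, dotProduct, Finset.sum_apply, Matrix.sum_apply, Finset.sum_mul]
  rw [Finset.sum_comm]

lemma euclInner_mulVec_left {n : ℕ} (A : Matrix (Fin n) (Fin n) ℂ) (v w : Fin n → ℂ) :
    euclInner (A.mulVec v) w = euclInner v (Aᴴ.mulVec w) := by
  unfold euclInner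
  simp only [Matrix.mulVec, dotProduct, Matrix.conjTranspose_apply, Finset.sum_mul,
    star_sum, Finset.mul_sum, star_mul', star_star]
  rw [Finset.sum_comm]
  refine Finset.sum_congr rfl fun j _ => Finset.sum_congr rfl fun i _ => by ring

lemma euclInner_self {n : ℕ} (v : Fin n → ℂ) :
    euclInner v v = ((∑ i, ‖v i‖ ^ 2 : ℝ) : ℂ) := by
  unfold euclInner
  push_cast
  refine Finset.sum_congr rfl fun i _ => ?_
  rw [Complex.star_def, Complex.mul_conj, Complex.normSq_eq_norm_sq,
    Complex.ofReal_pow]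

lemma euclNorm_sq {n : ℕ} (v : Fin n → ℂ) (hv : euclNorm v = 1) :
    (∑ i, ‖v i‖ ^ 2 : ℝ) = 1 := by
  unfold euclNorm at hv
  exact Real.sqrt_eq_one.mp hv

set_option maxHeartbeats 1000000 in
theorem stmt6 {n : ℕ} {ι : Type*} [Fintype ι]
    (θ : ι → ℝ) (F : ι → Matrix (Fin n) (Fin n) ℂ)
    (hdist : ∀ r s, Complex.exp (θ r * Complex.I) = Complex.exp (θ s * Complex.I) → r = s)
    (hherm : ∀ r, (F r)ᴴ = F r)
    (hidem : ∀ r, F r * F r = F r)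
    (horth : ∀ r s, r ≠ s → F r * F s = 0)
    (hsum : ∑ r, F r = 1)
    (U : Matrix (Fin n) (Fin n) ℂ)
    (hU : U = ∑ r, Complex.exp (θ r * Complex.I) • F r)
    (x y : Fin n → ℂ) (hx : euclNorm x = 1) (hy : euclNorm y = 1) :
    (∃ (t : ℤ) (γ : ℂ), (U ^ t).mulVec x = γ • y) ↔
      ∃ μ : ι → ℂ,
        (∀ r, ‖μ r‖ = 1 ∧ (F r).mulVec x = μ r • (F r).mulVec y) ∧
        ∃ t : ℤ, ∀ r s, (F r).mulVec x ≠ 0 → (F s).mulVec x ≠ 0 →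
          Complex.exp ((t : ℂ) * θ r * Complex.I) * μ r =
            Complex.exp ((t : ℂ) * θ s * Complex.I) * μ s := by
  classical
  set E : ℤ → ι → ℂ := fun t r => Complex.exp ((t : ℂ) * θ r * Complex.I) with hE
  set W : ℤ → Matrix (Fin n) (Fin n) ℂ := fun t => ∑ r, E t r • F r with hWdef
  have hE_add : ∀ (a b : ℤ) (r : ι), E (a + b) r = E a r * E b r := by
    intro a b r
    rw [hE]
    simp only
    rw [← Complex.exp_add]
    congr 1
    push_cast
    ring
  have hE0 : ∀ r, E 0 r = 1 := by
    intro r; simp [hE]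
  have hEunit : ∀ (t : ℤ) (r : ι), E (-t) r * E t r = 1 := by
    intro t r
    rw [← hE_add]
    simp [hE0]
  have hEne : ∀ (t : ℤ) (r : ι), E t r ≠ 0 := fun t r => Complex.exp_ne_zero _
  have hWmul : ∀ a b : ℤ, W a * W b = W (a + b) := by
    intro a b
    rw [hWdef]
    simp only
    rw [Finset.sum_mul_sum]
    refine Finset.sum_congr rfl fun r _ => ?_
    rw [Finset.sum_eq_single r]
    · rw [Matrix.smul_mul, Matrix.mul_smul, hidem, smul_smul, hE_add, mul_comm]
    · intro s _ hs
      rw [Matrix.smul_mul, Matrix.mul_smul, horth r s (Ne.symm hs), smul_zero, smul_zero]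
    · intro h; exact absurd (Finset.mem_univ r) h
  have hW0 : W 0 = 1 := by
    rw [hWdef]
    simp only [hE0, one_smul]
    exact hsum
  have hE1 : ∀ r, E 1 r = Complex.exp (θ r * Complex.I) := by
    intro r
    simp only [hE]
    push_cast
    rw [one_mul]
  have hW1 : W 1 = U := by
    rw [hWdef, hU]
    exact Finset.sum_congr rfl fun r _ => by rw [hE1]
  have hWn : ∀ m : ℕ, U ^ m = W m := by
    intro m
    induction m with
    | zero => simpa using hW0.symm
    | succ k ih =>
      rw [pow_succ, ih, ← hW1, hWmul]
      norm_cast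
  have hWz : ∀ t : ℤ, U ^ t = W t := by
    intro t
    cases t with
    | ofNat m =>
      rw [Int.ofNat_eq_natCast, zpow_natCast, hWn]
    | negSucc m =>
      rw [zpow_negSucc, hWn]
      have h1 : W (-(((m : ℤ) + 1))) * W ((m : ℤ) + 1) = 1 := by
        rw [hWmul, show -(((m : ℤ)) + 1) + ((m : ℤ) + 1) = 0 by ring]
        exact hW0
      have h2 : (((m + 1 : ℕ) : ℤ)) = ((m : ℤ) + 1) := by push_cast; ring
      rw [h2, Matrix.inv_eq_left_inv h1, Int.negSucc_eq]
  have hFW : ∀ (t : ℤ) (r : ι), F r * W t = E t r • F r := by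
    intro t r
    rw [hWdef]
    simp only [Finset.mul_sum]
    rw [Finset.sum_eq_single r]
    · rw [Matrix.mul_smul, hidem]
    · intro s _ hs
      rw [Matrix.mul_smul, horth r s (Ne.symm hs), smul_zero]
    · intro h; exact absurd (Finset.mem_univ r) h
  have hEstar : ∀ (t : ℤ) (r : ι), star (E t r) = E (-t) r := by
    intro t r
    rw [hE]
    simp only
    rw [Complex.star_def, ← Complex.exp_conj]
    congr 1
    simp only [_root_.map_mul, Complex.conj_I]
    rw [Complex.conj_ofReal]
    push_cast
    have : (starRingEnd ℂ) ((t : ℂ)) = (t : ℂ) := by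
      rw [← Complex.ofReal_intCast, Complex.conj_ofReal]
    rw [this]
    ring
  have hWH : ∀ t : ℤ, (W t)ᴴ = W (-t) := by
    intro t
    rw [hWdef]
    simp only
    rw [Matrix.conjTranspose_sum]
    refine Finset.sum_congr rfl fun r _ => ?_
    rw [Matrix.conjTranspose_smul, hherm, hEstar]
  constructor
  · rintro ⟨t, γ, hpst⟩
    rw [hWz] at hpst
    -- norm of γ is 1
    have hinner : euclInner (γ • y) (γ • y) = euclInner x x := by
      rw [← hpst, euclInner_mulVec_left, hWH, Matrix.mulVec_mulVec, hWmul]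
      simp [hW0]
    have hgy : (∑ i, ‖(γ • y) i‖ ^ 2 : ℝ) = (∑ i, ‖x i‖ ^ 2 : ℝ) := by
      have := hinner
      rw [euclInner_self, euclInner_self] at this
      exact_mod_cast this
    have hnγ : ‖γ‖ = 1 := by
      have h1 : (∑ i, ‖(γ • y) i‖ ^ 2 : ℝ) = ‖γ‖ ^ 2 * (∑ i, ‖y i‖ ^ 2 : ℝ) := by
        rw [Finset.mul_sum]
        refine Finset.sum_congr rfl fun i _ => ?_
        simp [norm_smul, mul_pow]
      rw [h1, euclNorm_sq y hy, euclNorm_sq x hx, mul_one] at hgy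
      have := Real.sqrt_eq_one.mpr hgy
      rwa [Real.sqrt_sq (norm_nonneg γ)] at this
    refine ⟨fun r => γ * E (-t) r, fun r => ⟨?_, ?_⟩, t, fun r s _ _ => ?_⟩
    · rw [norm_mul, hnγ, one_mul, hE]
      simp only
      rw [Complex.norm_exp]
      convert Real.exp_zero using 2
      simp [Complex.mul_re]
    · have h1 : F r *ᵥ (W t *ᵥ x) = γ • (F r *ᵥ y) := by
        rw [hpst, Matrix.mulVec_smul]
      rw [Matrix.mulVec_mulVec, hFW, Matrix.smul_mulVec] at h1
      have h2 := congrArg (fun v => E (-t) r • v) h1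
      simp only [smul_smul, hEunit, one_smul] at h2
      rw [h2]
      show (E (-t) r * γ) • (F r) *ᵥ y = (γ * E (-t) r) • (F r) *ᵥ y
      rw [mul_comm]
    · show E t r * (γ * E (-t) r) = E t s * (γ * E (-t) s)
      have key : ∀ u : ι, E t u * (γ * E (-t) u) = γ := by
        intro u
        calc E t u * (γ * E (-t) u) = γ * (E (-t) u * E t u) := by ring
        _ = γ := by rw [hEunit, mul_one]
      rw [key, key]
  · rintro ⟨μ, hμ, t, hph⟩
    have hr0 : ∃ r, (F r).mulVec x ≠ 0 := by
      by_contra h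
      push_neg at h
      have hx0 : x = 0 := by
        have h1 : (∑ r, F r) *ᵥ x = x := by rw [hsum, Matrix.one_mulVec]
        rw [sum_mulVec'] at h1
        simp only [h] at h1
        simpa using h1.symm
      rw [hx0] at hx
      simp [euclNorm] at hx
    obtain ⟨r₀, hr₀⟩ := hr0
    refine ⟨t, E t r₀ * μ r₀, ?_⟩
    rw [hWz, hWdef]
    simp only
    rw [sum_mulVec']
    have hterm : ∀ r : ι, (E t r • F r) *ᵥ x = (E t r₀ * μ r₀) • (F r *ᵥ y) := by
      intro r
      rw [Matrix.smul_mulVec, (hμ r).2, smul_smul]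
      by_cases hfx : (F r).mulVec x ≠ 0
      · rw [hph r r₀ hfx hr₀]
      · push_neg at hfx
        have hμne : μ r ≠ 0 := by
          intro h0
          have := (hμ r).1
          rw [h0] at this
          simp at this
        have hfy : (F r).mulVec y = 0 := by
          have := (hμ r).2
          rw [hfx] at this
          rcases smul_eq_zero.mp this.symm with h | h
          · exact absurd h hμne
          · exact h
        rw [hfy, smul_zero, smul_zero]
    rw [Finset.sum_congr rfl fun r _ => hterm r]
    rw [← Finset.smul_sum, ← sum_mulVec', hsum, Matrix.one_mulVec]
end

section
/- Let U be an n×n complex unitary matrix with spectral decomposition U = Σ_r e^{iθ_r} F_r, let m be a positive integer, and let x, y be unit vectors in ℂⁿ that are m-strongly cospectral. If there is pretty good state transfer from x to y, then there is pretty good state transfer from y to x. -/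
open Matrix Complex Finset

lemma euclNorm_smul {ι : Type*} [Fintype ι] (c : ℂ) (v : ι → ℂ) :
    euclNorm (c • v) = ‖c‖ * euclNorm v := by
  unfold euclNorm
  have : ∀ i, ‖(c • v) i‖ ^ 2 = ‖c‖ ^ 2 * ‖v i‖ ^ 2 := by
    intro i; simp [norm_mul, mul_pow]
  rw [Finset.sum_congr rfl (fun i _ => this i), ← Finset.mul_sum,
    Real.sqrt_mul (sq_nonneg _), Real.sqrt_sq (norm_nonneg c)]

lemma sum_normSq_eq {ι : Type*} [Fintype ι] (v : ι → ℂ) :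
    (∑ i, ‖v i‖ ^ 2) = (star v ⬝ᵥ v).re := by
  rw [dotProduct, Complex.re_sum]
  refine Finset.sum_congr rfl fun i _ => ?_
  rw [Pi.star_apply, Complex.star_def, mul_comm, Complex.mul_conj]
  rw [Complex.ofReal_re, Complex.normSq_eq_norm_sq]

lemma euclNorm_mulVec_of {n : ℕ} {V : Matrix (Fin n) (Fin n) ℂ} (h : Vᴴ * V = 1)
    (w : Fin n → ℂ) : euclNorm (V.mulVec w) = euclNorm w := by
  unfold euclNorm
  congr 1
  rw [sum_normSq_eq, sum_normSq_eq]
  congr 1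
  rw [Matrix.star_mulVec, ← Matrix.dotProduct_mulVec, Matrix.mulVec_mulVec, h,
    Matrix.one_mulVec]

theorem stmt9 {n : ℕ} {ι : Type*} [Fintype ι]
    (θ : ι → ℝ) (F : ι → Matrix (Fin n) (Fin n) ℂ)
    (hdist : ∀ r s, Complex.exp (θ r * Complex.I) = Complex.exp (θ s * Complex.I) → r = s)
    (hherm : ∀ r, (F r)ᴴ = F r)
    (hidem : ∀ r, F r * F r = F r)
    (horth : ∀ r s, r ≠ s → F r * F s = 0)
    (hsum : ∑ r, F r = 1)
    (U : Matrix (Fin n) (Fin n) ℂ)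
    (hU : U = ∑ r, Complex.exp (θ r * Complex.I) • F r)
    (x y : Fin n → ℂ) (hx : euclNorm x = 1) (hy : euclNorm y = 1)
    (m : ℕ) (hm : 0 < m) (σ : ι → ℤ)
    (hsc : ∀ r, (F r).mulVec x ≠ 0 →
      (F r).mulVec x = Complex.exp (2 * Real.pi * (σ r : ℂ) / m * Complex.I) • (F r).mulVec y)
    (hcop : ∃ r, (F r).mulVec x ≠ 0 ∧ Int.gcd (σ r) m = 1)
    (hpgst : PGST U x y) :
    PGST U y x := by
  -- U is unitary
  have hstar : ∀ r, star (Complex.exp (θ r * Complex.I)) * Complex.exp (θ r * Complex.I) = 1 := by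
    intro r
    have : star (Complex.exp (θ r * Complex.I)) = Complex.exp (-(θ r * Complex.I)) := by
      rw [Complex.star_def, ← Complex.exp_conj, _root_.map_mul, Complex.conj_ofReal,
        Complex.conj_I, mul_neg]
    rw [this, ← Complex.exp_add, neg_add_cancel, Complex.exp_zero]
  have key : Uᴴ * U = 1 := by
    calc Uᴴ * U
        = ∑ r, ∑ s, (star (Complex.exp (θ r * Complex.I)) * Complex.exp (θ s * Complex.I))
            • (F r * F s) := by
          rw [hU, conjTranspose_sum, Finset.sum_mul]
          refine Finset.sum_congr rfl fun r _ => ?_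
          rw [conjTranspose_smul, hherm, Finset.mul_sum]
          refine Finset.sum_congr rfl fun s _ => ?_
          rw [Matrix.smul_mul, Matrix.mul_smul, smul_smul]
      _ = ∑ r, (star (Complex.exp (θ r * Complex.I)) * Complex.exp (θ r * Complex.I))
            • (F r * F r) := by
          refine Finset.sum_congr rfl fun r _ => ?_
          refine Finset.sum_eq_single r (fun s _ hs => ?_) (fun h => absurd (Finset.mem_univ r) h)
          rw [horth r s (Ne.symm hs), smul_zero]
      _ = ∑ r, F r := by
          refine Finset.sum_congr rfl fun r _ => ?_
          rw [hstar r, hidem r, one_smul]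
      _ = 1 := hsum
  have hdet : IsUnit U.det := by
    have : Uᴴ.det * U.det = 1 := by rw [← Matrix.det_mul, key, Matrix.det_one]
    exact IsUnit.of_mul_eq_one _ (by rw [mul_comm]; exact this)
  have hinv : U⁻¹ = Uᴴ := Matrix.inv_eq_left_inv key
  have hzpow_unit : ∀ t : ℤ, (U ^ t)ᴴ * (U ^ t) = 1 := by
    intro t
    rw [Matrix.conjTranspose_zpow, ← hinv, Matrix.inv_zpow]
    exact Matrix.nonsing_inv_mul _ (hdet.det_zpow t)
  obtain ⟨γ, hγ, hγε⟩ := hpgst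
  have hγγ : star γ * γ = 1 := by
    rw [Complex.star_def, mul_comm, Complex.mul_conj]
    rw [Complex.normSq_eq_norm_sq, hγ]
    norm_num
  refine ⟨star γ, by rw [norm_star, hγ], fun ε hε => ?_⟩
  obtain ⟨t, ht⟩ := hγε ε hε
  refine ⟨-t, ?_⟩
  have hVW : U ^ t * U ^ (-t) = 1 := by
    have := Matrix.zpow_neg_mul_zpow_self (-t) hdet
    rwa [neg_neg] at this
  have step : (U ^ t).mulVec ((U ^ (-t)).mulVec y - star γ • x)
      = (-star γ) • ((U ^ t).mulVec x - γ • y) := by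
    rw [Matrix.mulVec_sub, Matrix.mulVec_mulVec, hVW, Matrix.one_mulVec, Matrix.mulVec_smul]
    funext i
    simp only [Pi.sub_apply, Pi.smul_apply, smul_eq_mul, Pi.neg_apply]
    linear_combination -y i * hγγ
  have := euclNorm_mulVec_of (hzpow_unit t) ((U ^ (-t)).mulVec y - star γ • x)
  rw [← this, step, euclNorm_smul]
  rw [norm_neg, norm_star, hγ, one_mul]
  exact ht
end

section
/- Let H = (h_{ab}) be an n×n complex Hermitian matrix with zero diagonal such that for every index a, Σ_{b} |h_{ab}| = 1. Then there exists an n×n complex matrix W = (w_{ab}) such that w_{ab} ≠ 0 if and only if h_{ab} ≠ 0, w_{ab}·conj(w_{ba}) = h_{ab} for all a, b, and Σ_b |w_{ab}|² = 1 for every a (i.e., H = W ∘ W* and W ∘ conj(W) is row-stochastic). -/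
open Matrix Complex Finset

theorem stmt14 {n : ℕ} (H : Matrix (Fin n) (Fin n) ℂ)
    (hherm : Hᴴ = H)
    (hdiag : ∀ a, H a a = 0)
    (hrow : ∀ a, ∑ b, ‖H a b‖ = 1) :
    ∃ W : Matrix (Fin n) (Fin n) ℂ,
      (∀ a b, W a b ≠ 0 ↔ H a b ≠ 0) ∧
      (∀ a b, W a b * star (W b a) = H a b) ∧
      (∀ a, ∑ b, ‖W a b‖ ^ 2 = 1) := by
  have hsymm : ∀ a b, H b a = star (H a b) := by
    intro a b
    have := congrFun (congrFun hherm b) a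
    simpa [Matrix.conjTranspose_apply] using this.symm
  have hnorm : ∀ a b, ‖H b a‖ = ‖H a b‖ := by
    intro a b; rw [hsymm a b, norm_star]
  have hc : ∀ z : ℂ, z ≠ 0 → (Real.sqrt ‖z‖ : ℂ) ≠ 0 := by
    intro z hz
    have : Real.sqrt ‖z‖ ≠ 0 :=
      ne_of_gt (Real.sqrt_pos.2 (norm_pos_iff.2 hz))
    exact_mod_cast Complex.ofReal_ne_zero.2 this
  have hstarc : ∀ r : ℝ, star ((r : ℂ)) = (r : ℂ) := by
    intro r; simp [Complex.star_def, Complex.conj_ofReal]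
  refine ⟨fun a b => if a ≤ b then H a b / (Real.sqrt ‖H a b‖ : ℂ)
      else (Real.sqrt ‖H a b‖ : ℂ), ?_, ?_, ?_⟩
  · intro a b
    by_cases hab : a ≤ b <;> simp only [hab, if_true, if_false]
    · constructor
      · intro h h0; exact h (by simp [h0])
      · intro h; exact div_ne_zero h (hc _ h)
    · constructor
      · intro h h0; exact h (by simp [h0])
      · intro h; exact hc _ h
  · intro a b
    rcases lt_trichotomy a b with hab | hab | hab
    · simp only [hab.le, if_true, not_le.2 hab, if_false]
      rw [hnorm a b, hstarc]
      by_cases h0 : H a b = 0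
      · simp [h0]
      · exact div_mul_cancel₀ _ (hc _ h0)
    · subst hab; simp [hdiag a]
    · simp only [not_le.2 hab, if_false, hab.le, if_true]
      rw [star_div₀, hsymm a b, star_star, norm_star, hstarc]
      by_cases h0 : H a b = 0
      · simp [h0]
      · rw [mul_comm, div_mul_cancel₀ _ (hc _ h0)]
  · intro a
    have key : ∀ b, ‖(if a ≤ b then H a b / (Real.sqrt ‖H a b‖ : ℂ)
        else (Real.sqrt ‖H a b‖ : ℂ))‖ ^ 2 = ‖H a b‖ := by
      intro b
      by_cases hab : a ≤ b <;> simp only [hab, if_true, if_false]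
      · by_cases h0 : H a b = 0
        · simp [h0]
        · rw [norm_div, Complex.norm_real, Real.norm_eq_abs,
            _root_.abs_of_nonneg (Real.sqrt_nonneg _), div_pow, Real.sq_sqrt (norm_nonneg _)]
          have : ‖H a b‖ ≠ 0 := norm_ne_zero_iff.2 h0
          field_simp
      · rw [Complex.norm_real, Real.norm_eq_abs,
          _root_.abs_of_nonneg (Real.sqrt_nonneg _), Real.sq_sqrt (norm_nonneg _)]
    calc ∑ b, ‖(if a ≤ b then H a b / (Real.sqrt ‖H a b‖ : ℂ)
        else (Real.sqrt ‖H a b‖ : ℂ))‖ ^ 2 = ∑ b, ‖H a b‖ := by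
          exact Finset.sum_congr rfl fun b _ => key b
      _ = 1 := hrow a
end

section
/- Let p be an odd prime. For any two distinct integers j, k with 1 ≤ j, k ≤ (p−1)/2, the squarefree parts of j(p−j) and k(p−k) are distinct; equivalently, j(p−j)·k(p−k) is not a perfect square. -/
private lemma auxB2 (P J K : ℤ) (hJ : 1 ≤ J) (hK : 1 ≤ K) (hs : J + K + 1 ≤ P)
    (hE : ((2 - 1) * P + (J + K))^2 = 4 * (J * K) * 2) : False := by
  nlinarith [hE, sq_nonneg (J - K),
    mul_nonneg (by linarith : (0:ℤ) ≤ P - (J + K) - 1) (by linarith : (0:ℤ) ≤ P + (J + K))]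

private lemma auxB3 (P J K V : ℤ) (hJ : 1 ≤ J) (hK : 1 ≤ K) (hs : J + K + 1 ≤ P)
    (hV : 3 ≤ V) (hE : ((V - 1) * P + (J + K))^2 = 4 * (J * K) * V) : False := by
  have hP : 0 < P := by linarith
  have hAM : 4 * (J * K) ≤ (J + K)^2 := by nlinarith [sq_nonneg (J - K)]
  have hs0 : (0:ℤ) ≤ J + K := by linarith
  have h5 : (V - 1)^2 * P^2 ≤ ((V - 1) * P + (J + K))^2 := by
    nlinarith [mul_nonneg (by linarith : (0:ℤ) ≤ V - 1) hP.le, sq_nonneg (J + K)]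
  have h6 : (J + K)^2 * V ≤ (P - 1)^2 * V :=
    mul_le_mul_of_nonneg_right (by nlinarith : (J + K)^2 ≤ (P - 1)^2) (by linarith)
  have h7 : 4 * (J * K) * V ≤ (J + K)^2 * V :=
    mul_le_mul_of_nonneg_right hAM (by linarith)
  have h8 : V ≤ (V - 1)^2 := by
    nlinarith [mul_nonneg (by linarith : (0:ℤ) ≤ V - 3) (by linarith : (0:ℤ) ≤ V)]
  have h9 : V * P^2 ≤ (V - 1)^2 * P^2 := mul_le_mul_of_nonneg_right h8 (by positivity)
  nlinarith [h5, h6, h7, h9, hE,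
    mul_pos (by linarith : (0:ℤ) < 2 * P - 1) (by linarith : (0:ℤ) < V)]

set_option maxHeartbeats 1000000 in
theorem stmt16 (p : ℕ) (hp : p.Prime) (hodd : Odd p)
    (j k : ℕ) (hj1 : 1 ≤ j) (hj2 : j ≤ (p - 1) / 2) (hk1 : 1 ≤ k) (hk2 : k ≤ (p - 1) / 2)
    (hjk : j ≠ k) :
    ¬IsSquare (j * (p - j) * (k * (p - k))) := by
  rintro ⟨m, hm⟩
  obtain ⟨q, hq⟩ := hodd
  have hp2 : 2 ≤ p := hp.two_le
  have hjp : j < p := by omega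
  have hkp : k < p := by omega
  have hjkp : j + k + 1 ≤ p := by omega
  -- cast to ℤ
  have heq : (j:ℤ) * ((p:ℤ) - j) * ((k:ℤ) * ((p:ℤ) - k)) = (m:ℤ) * m := by
    have := congrArg (Nat.cast : ℕ → ℤ) hm
    push_cast [Nat.cast_sub hjp.le, Nat.cast_sub hkp.le] at this
    linarith [this]
  have hJ1 : 1 ≤ (j:ℤ) := by exact_mod_cast hj1
  have hK1 : 1 ≤ (k:ℤ) := by exact_mod_cast hk1
  have hJP : (j:ℤ) < p := by exact_mod_cast hjp
  have hKP : (k:ℤ) < p := by exact_mod_cast hkp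
  have hJKP : (j:ℤ) + k + 1 ≤ p := by exact_mod_cast hjkp
  have hM0 : 0 ≤ (m:ℤ) := Int.natCast_nonneg m
  have hPpos : (0:ℤ) < p := by positivity
  have hPprime : Prime ((p:ℤ)) := by rw [Int.prime_iff_natAbs_prime]; simpa
  -- key identity: m² = (jk)² + p·(jk)·(p-j-k)
  have key : (m:ℤ) * m = ((j:ℤ)*k)^2 + (p:ℤ) * ((j:ℤ)*k) * ((p:ℤ) - j - k) := by
    linear_combination -heq
  have hcpos : (0:ℤ) < (j:ℤ)*k := by positivity
  have htpos : (1:ℤ) ≤ (p:ℤ) - j - k := by linarith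
  -- p does not divide jk
  have hpc : ¬ ((p:ℤ) ∣ (j:ℤ)*k) := by
    intro h
    rcases hPprime.dvd_mul.mp h with h | h
    · have : p ∣ j := by exact_mod_cast h
      have := Nat.le_of_dvd (by omega) this; omega
    · have : p ∣ k := by exact_mod_cast h
      have := Nat.le_of_dvd (by omega) this; omega
  have hdvd : (p:ℤ) ∣ ((m:ℤ) - (j:ℤ)*k) * ((m:ℤ) + (j:ℤ)*k) :=
    ⟨((j:ℤ)*k) * ((p:ℤ) - j - k), by linear_combination key⟩
  rcases hPprime.dvd_mul.mp hdvd with hca | hcb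
  · -- Case A : m ≡ jk (mod p)
    obtain ⟨u, hu⟩ := hca
    have hmc : (j:ℤ)*k < m := by
      by_contra h
      push_neg at h
      nlinarith [key, mul_pos (mul_pos hPpos hcpos) (by linarith : (0:ℤ) < (p:ℤ) - j - k),
        mul_le_mul h h hM0 hcpos.le]
    have hpu : (0:ℤ) < (p:ℤ) * u := by linarith
    have hu1 : 1 ≤ u := by
      rcases mul_pos_iff.mp hpu with ⟨_, h⟩ | ⟨h, _⟩
      · linarith
      · linarith
    have h1' : (p:ℤ) * (((j:ℤ)*k) * (((p:ℤ) - j - k) - 2*u)) = (p:ℤ) * ((p:ℤ)*u^2) := by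
      linear_combination (-1 : ℤ) * key + ((m:ℤ) + (j:ℤ)*k + (p:ℤ)*u) * hu
    have h1 : ((j:ℤ)*k) * (((p:ℤ) - j - k) - 2*u) = (p:ℤ)*u^2 :=
      mul_left_cancel₀ (by positivity) h1'
    have htu : 0 < ((p:ℤ) - j - k) - 2*u := by
      by_contra h
      push_neg at h
      nlinarith [h1, mul_pos hPpos (by positivity : (0:ℤ) < u^2),
        mul_nonpos_of_nonneg_of_nonpos hcpos.le h]
    have hd2 : (p:ℤ) ∣ ((j:ℤ)*k) * (((p:ℤ) - j - k) - 2*u) := ⟨u^2, h1⟩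
    rcases hPprime.dvd_mul.mp hd2 with h | h
    · exact hpc h
    · have := Int.le_of_dvd htu h
      linarith
  · -- Case B : m ≡ -jk (mod p)
    obtain ⟨u, hu⟩ := hcb
    have hpu : (0:ℤ) < (p:ℤ) * u := by linarith
    have hu1 : 1 ≤ u := by
      rcases mul_pos_iff.mp hpu with ⟨_, h⟩ | ⟨h, _⟩
      · linarith
      · linarith
    have h2' : (p:ℤ) * (((j:ℤ)*k) * (((p:ℤ) - j - k) + 2*u)) = (p:ℤ) * ((p:ℤ)*u^2) := by
      linear_combination (-1 : ℤ) * key + ((m:ℤ) - (j:ℤ)*k + (p:ℤ)*u) * hu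
    have h2 : ((j:ℤ)*k) * (((p:ℤ) - j - k) + 2*u) = (p:ℤ)*u^2 :=
      mul_left_cancel₀ (by positivity) h2'
    have hd2 : (p:ℤ) ∣ ((j:ℤ)*k) * (((p:ℤ) - j - k) + 2*u) := ⟨u^2, h2⟩
    have hdtu : (p:ℤ) ∣ ((p:ℤ) - j - k) + 2*u := by
      rcases hPprime.dvd_mul.mp hd2 with h | h
      · exact absurd h hpc
      · exact h
    obtain ⟨v, hv⟩ := hdtu
    have hpv : (0:ℤ) < (p:ℤ) * v := by linarith
    have hv1 : 1 ≤ v := by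
      rcases mul_pos_iff.mp hpv with ⟨_, h⟩ | ⟨h, _⟩
      · linarith
      · linarith
    have hu2 : u^2 = ((j:ℤ)*k) * v := by
      have haux : (p:ℤ) * (((j:ℤ)*k) * v) = (p:ℤ) * u^2 := by
        linear_combination h2 - ((j:ℤ)*k) * hv
      exact (mul_left_cancel₀ (by positivity : ((p:ℤ)) ≠ 0) haux).symm
    have h2u : 2*u = (v-1)*(p:ℤ) + ((j:ℤ) + k) := by linarith [hv]
    -- main equation
    have hE : ((v-1)*(p:ℤ) + ((j:ℤ) + k))^2 = 4*((j:ℤ)*k)*v := by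
      linear_combination 4*hu2 - (2*u + (v-1)*(p:ℤ) + ((j:ℤ)+k)) * h2u
    have hAM : 4*((j:ℤ)*k) ≤ ((j:ℤ) + k)^2 := by nlinarith [sq_nonneg ((j:ℤ) - k)]
    rcases eq_or_lt_of_le hv1 with hv1' | hv2
    · -- v = 1 forces j = k
      rw [← hv1'] at hE
      have hz : ((j:ℤ) - k)^2 = 0 := by linear_combination hE
      have : (j:ℤ) = k := by
        have := sq_eq_zero_iff.mp hz
        linarith
      exact hjk (by exact_mod_cast this)
    · rcases eq_or_lt_of_le (show (2:ℤ) ≤ v by omega) with hveq | hv3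
      · -- v = 2
        rw [← hveq] at hE
        exact auxB2 (p:ℤ) j k hJ1 hK1 hJKP hE
      · -- v ≥ 3
        exact auxB3 (p:ℤ) j k v hJ1 hK1 hJKP hv3 hE
end
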